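/- Inverse property of the density-operator Radon–Nikodym derivative: let ρ and σ be positive semidefinite Hermitian K×K complex matrices with ρ ≈ σ. Then for every K×K complex matrix X, φ(ρ,σ)[φ(σ,ρ)[X]] = Π_+(ρ) X Π_+(ρ), where Π_+(ρ) is the orthogonal projection onto the range of ρ. In particular, φ(ρ,σ)[φ(σ,ρ)[τ]] = τ for every Hermitian K×K matrix τ with τ ≪ ρ. -/

import Mathlib

open Matrix
open scoped ComplexOrder

/-- A density operator: positive semidefinite (hence Hermitian) with trace 1. -/
def IsDensityOp {K : ℕ} (ρ : Matrix (Fin K) (Fin K) ℂ) : Prop :=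
  ρ.PosSemidef ∧ ρ.trace = 1

/-- σ ≪ ρ : every null vector of ρ is a null vector of σ. -/
def AbsCont {K : ℕ} (σ ρ : Matrix (Fin K) (Fin K) ℂ) : Prop :=
  ∀ ψ : Fin K → ℂ, ρ *ᵥ ψ = 0 → σ *ᵥ ψ = 0

/-- ρ ≈ σ : mutual absolute continuity. -/
def EquivDO {K : ℕ} (ρ σ : Matrix (Fin K) (Fin K) ℂ) : Prop := AbsCont σ ρ ∧ AbsCont ρ σ

/-- ρ^{-1/2}: the Moore–Penrose pseudoinverse of the positive semidefinite square root
ρ^{1/2} of a positive semidefinite Hermitian matrix ρ, via the spectral decomposition. -/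
noncomputable def invSqrt {K : ℕ} (ρ : Matrix (Fin K) (Fin K) ℂ) (hρ : ρ.IsHermitian) :
    Matrix (Fin K) (Fin K) ℂ :=
  (hρ.eigenvectorUnitary : Matrix (Fin K) (Fin K) ℂ) *
    Matrix.diagonal (fun i => ((Real.sqrt (hρ.eigenvalues i))⁻¹ : ℂ)) *
    star (hρ.eigenvectorUnitary : Matrix (Fin K) (Fin K) ℂ)

/-- The positive semidefinite square root, as `Matrix.PosSemidef.sqrt` was defined in the older Mathlib. -/
noncomputable def posSemidefSqrt {K : ℕ} {A : Matrix (Fin K) (Fin K) ℂ} (hA : A.PosSemidef) :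
    Matrix (Fin K) (Fin K) ℂ :=
  (hA.1.eigenvectorUnitary : Matrix (Fin K) (Fin K) ℂ) *
    Matrix.diagonal ((↑) ∘ Real.sqrt ∘ hA.1.eigenvalues) *
    star (hA.1.eigenvectorUnitary : Matrix (Fin K) (Fin K) ℂ)

/-- The density-operator Radon–Nikodym derivative φ(σ,ρ)[X] = σ^{1/2} ρ^{-1/2} X ρ^{-1/2} σ^{1/2}. -/
noncomputable def rnDeriv {K : ℕ} (σ ρ : Matrix (Fin K) (Fin K) ℂ)
    (hσ : σ.PosSemidef) (hρ : ρ.PosSemidef) (X : Matrix (Fin K) (Fin K) ℂ) :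
    Matrix (Fin K) (Fin K) ℂ :=
  posSemidefSqrt hσ * invSqrt ρ hρ.1 * X * invSqrt ρ hρ.1 * posSemidefSqrt hσ

/-- Π_+(ρ): the orthogonal projection onto the range of the Hermitian matrix ρ,
via the spectral decomposition. -/
noncomputable def rangeProj {K : ℕ} (ρ : Matrix (Fin K) (Fin K) ℂ) (hρ : ρ.IsHermitian) :
    Matrix (Fin K) (Fin K) ℂ :=
  (hρ.eigenvectorUnitary : Matrix (Fin K) (Fin K) ℂ) *
    Matrix.diagonal (fun i => if hρ.eigenvalues i = 0 then (0 : ℂ) else 1) *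
    star (hρ.eigenvectorUnitary : Matrix (Fin K) (Fin K) ℂ)

section aux

variable {K : ℕ}

/-- Conjugation by a unitary is multiplicative. -/
lemma conj_conj (U D1 D2 : Matrix (Fin K) (Fin K) ℂ) (hU : star U * U = 1) :
    (U * D1 * star U) * (U * D2 * star U) = U * (D1 * D2) * star U := by
  calc (U * D1 * star U) * (U * D2 * star U)
      = U * (D1 * ((star U * U) * (D2 * star U))) := by simp only [Matrix.mul_assoc]
    _ = U * (D1 * D2) * star U := by rw [hU, one_mul]; simp only [Matrix.mul_assoc]

lemma star_unitary_mul {A : Matrix (Fin K) (Fin K) ℂ} (hA : A.IsHermitian) :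
    star (hA.eigenvectorUnitary : Matrix (Fin K) (Fin K) ℂ) *
      (hA.eigenvectorUnitary : Matrix (Fin K) (Fin K) ℂ) = 1 :=
  Unitary.coe_star_mul_self _

lemma posSemidefSqrt_isHermitian {A : Matrix (Fin K) (Fin K) ℂ} (hA : A.PosSemidef) :
    (posSemidefSqrt hA).IsHermitian := by
  unfold posSemidefSqrt
  rw [Matrix.star_eq_conjTranspose]
  apply Matrix.isHermitian_mul_mul_conjTranspose
  rw [Matrix.IsHermitian, Matrix.diagonal_conjTranspose]
  refine congrArg Matrix.diagonal (funext fun i => ?_)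
  simp

lemma posSemidefSqrt_mul_self {A : Matrix (Fin K) (Fin K) ℂ} (hA : A.PosSemidef) :
    posSemidefSqrt hA * posSemidefSqrt hA = A := by
  rw [posSemidefSqrt, conj_conj _ _ _ (star_unitary_mul hA.1), Matrix.diagonal_mul_diagonal]
  conv_rhs => rw [hA.1.spectral_theorem, Unitary.conjStarAlgAut_apply]
  refine congrArg (fun D => _ * D * _) (congrArg Matrix.diagonal (funext fun i => ?_))
  simp only [Function.comp_apply]
  rw [← Complex.ofReal_mul, Real.mul_self_sqrt (hA.eigenvalues_nonneg i)]
  rfl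

lemma rangeProj_isHermitian {A : Matrix (Fin K) (Fin K) ℂ} (hA : A.IsHermitian) :
    (rangeProj A hA).IsHermitian := by
  unfold rangeProj
  rw [Matrix.star_eq_conjTranspose]
  apply Matrix.isHermitian_mul_mul_conjTranspose
  rw [Matrix.IsHermitian, Matrix.diagonal_conjTranspose]
  refine congrArg Matrix.diagonal (funext fun i => ?_)
  by_cases h : hA.eigenvalues i = 0 <;> simp [h]

lemma sqrt_eq {A : Matrix (Fin K) (Fin K) ℂ} (hA : A.PosSemidef) :
    posSemidefSqrt hA = (hA.1.eigenvectorUnitary : Matrix (Fin K) (Fin K) ℂ) *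
      Matrix.diagonal (fun i => ((Real.sqrt (hA.1.eigenvalues i) : ℝ) : ℂ)) *
      star (hA.1.eigenvectorUnitary : Matrix (Fin K) (Fin K) ℂ) := rfl

lemma conj_diag_congr {A : Matrix (Fin K) (Fin K) ℂ} (hA : A.IsHermitian)
    {f g : Fin K → ℂ} (h : ∀ i, f i = g i) :
    (hA.eigenvectorUnitary : Matrix (Fin K) (Fin K) ℂ) * Matrix.diagonal f *
        star (hA.eigenvectorUnitary : Matrix (Fin K) (Fin K) ℂ) =
      (hA.eigenvectorUnitary : Matrix (Fin K) (Fin K) ℂ) * Matrix.diagonal g *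
        star (hA.eigenvectorUnitary : Matrix (Fin K) (Fin K) ℂ) := by
  rw [show f = g from funext h]

lemma sqrt_mul_invSqrt {A : Matrix (Fin K) (Fin K) ℂ} (hA : A.PosSemidef) :
    posSemidefSqrt hA * invSqrt A hA.1 = rangeProj A hA.1 := by
  rw [sqrt_eq, invSqrt, conj_conj _ _ _ (star_unitary_mul hA.1), rangeProj,
    Matrix.diagonal_mul_diagonal]
  refine conj_diag_congr hA.1 fun i => ?_
  by_cases h : hA.1.eigenvalues i = 0
  · simp [h]
  · have hpos : 0 < hA.1.eigenvalues i := lt_of_le_of_ne (hA.eigenvalues_nonneg i) (Ne.symm h)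
    have hs : Real.sqrt (hA.1.eigenvalues i) ≠ 0 := ne_of_gt (Real.sqrt_pos.mpr hpos)
    rw [if_neg h]
    show (Real.sqrt (hA.1.eigenvalues i) : ℂ) * ((Real.sqrt (hA.1.eigenvalues i))⁻¹ : ℂ) = 1
    rw [← Complex.ofReal_inv, ← Complex.ofReal_mul, mul_inv_cancel₀ hs, Complex.ofReal_one]

lemma invSqrt_mul_sqrt {A : Matrix (Fin K) (Fin K) ℂ} (hA : A.PosSemidef) :
    invSqrt A hA.1 * posSemidefSqrt hA = rangeProj A hA.1 := by
  rw [sqrt_eq, invSqrt, conj_conj _ _ _ (star_unitary_mul hA.1), rangeProj,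
    Matrix.diagonal_mul_diagonal]
  refine conj_diag_congr hA.1 fun i => ?_
  by_cases h : hA.1.eigenvalues i = 0
  · simp [h]
  · have hpos : 0 < hA.1.eigenvalues i := lt_of_le_of_ne (hA.eigenvalues_nonneg i) (Ne.symm h)
    have hs : Real.sqrt (hA.1.eigenvalues i) ≠ 0 := ne_of_gt (Real.sqrt_pos.mpr hpos)
    rw [if_neg h]
    show ((Real.sqrt (hA.1.eigenvalues i))⁻¹ : ℂ) * (Real.sqrt (hA.1.eigenvalues i) : ℂ) = 1
    rw [← Complex.ofReal_inv, ← Complex.ofReal_mul, inv_mul_cancel₀ hs, Complex.ofReal_one]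

lemma mul_rangeProj_self {A : Matrix (Fin K) (Fin K) ℂ} (hA : A.IsHermitian) :
    A * rangeProj A hA = A := by
  have hs := hA.spectral_theorem
  rw [Unitary.conjStarAlgAut_apply] at hs
  calc A * rangeProj A hA
      = ((hA.eigenvectorUnitary : Matrix (Fin K) (Fin K) ℂ) *
          Matrix.diagonal (RCLike.ofReal ∘ hA.eigenvalues) *
          star (hA.eigenvectorUnitary : Matrix (Fin K) (Fin K) ℂ)) * rangeProj A hA := by
        rw [← hs]
    _ = (hA.eigenvectorUnitary : Matrix (Fin K) (Fin K) ℂ) *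
          (Matrix.diagonal (RCLike.ofReal ∘ hA.eigenvalues) *
            Matrix.diagonal (fun i => if hA.eigenvalues i = 0 then (0 : ℂ) else 1)) *
          star (hA.eigenvectorUnitary : Matrix (Fin K) (Fin K) ℂ) := by
        rw [rangeProj]; exact conj_conj _ _ _ (star_unitary_mul hA)
    _ = (hA.eigenvectorUnitary : Matrix (Fin K) (Fin K) ℂ) *
          Matrix.diagonal (RCLike.ofReal ∘ hA.eigenvalues) *
          star (hA.eigenvectorUnitary : Matrix (Fin K) (Fin K) ℂ) := by
        rw [Matrix.diagonal_mul_diagonal]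
        refine conj_diag_congr hA fun i => ?_
        by_cases h : hA.eigenvalues i = 0
        · show (RCLike.ofReal ∘ hA.eigenvalues) i * _ = (RCLike.ofReal ∘ hA.eigenvalues) i
          simp [h]
        · show (RCLike.ofReal ∘ hA.eigenvalues) i * _ = (RCLike.ofReal ∘ hA.eigenvalues) i
          rw [if_neg h, mul_one]
    _ = A := hs.symm

lemma mulVec_col {M N : Matrix (Fin K) (Fin K) ℂ} (j : Fin K) :
    M *ᵥ (fun k => N k j) = fun i => (M * N) i j := by
  funext i
  simp [Matrix.mulVec, Matrix.mul_apply, dotProduct]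

/-- If every null vector of `A` is a null vector of `M`, then `M * Π₊(A) = M`. -/
lemma mul_rangeProj {M A : Matrix (Fin K) (Fin K) ℂ} (hA : A.IsHermitian)
    (h : ∀ ψ, A *ᵥ ψ = 0 → M *ᵥ ψ = 0) : M * rangeProj A hA = M := by
  have hz : A * (1 - rangeProj A hA) = 0 := by
    rw [Matrix.mul_sub, Matrix.mul_one, mul_rangeProj_self hA, sub_self]
  have hzM : M * (1 - rangeProj A hA) = 0 := by
    ext i j
    have hcol : A *ᵥ (fun k => (1 - rangeProj A hA) k j) = 0 := by
      rw [mulVec_col, hz]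
      funext i
      simp
    have := congrFun (h _ hcol) i
    rwa [mulVec_col] at this
  rw [Matrix.mul_sub, Matrix.mul_one] at hzM
  exact (sub_eq_zero.mp hzM).symm

/-- For PSD `A`, `A ψ = 0` implies `√A ψ = 0`. -/
lemma sqrt_mulVec_zero {A : Matrix (Fin K) (Fin K) ℂ} (hA : A.PosSemidef)
    {ψ : Fin K → ℂ} (h : A *ᵥ ψ = 0) : posSemidefSqrt hA *ᵥ ψ = 0 := by
  rw [← dotProduct_star_self_eq_zero (v := posSemidefSqrt hA *ᵥ ψ), Matrix.star_mulVec,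
    ← Matrix.dotProduct_mulVec, Matrix.mulVec_mulVec, (posSemidefSqrt_isHermitian hA), posSemidefSqrt_mul_self hA,
    h, dotProduct_zero]

end aux

/-- Inverse property of the density-operator Radon–Nikodym derivative: if ρ ≈ σ, then
φ(ρ,σ)[φ(σ,ρ)[X]] = Π_+(ρ) X Π_+(ρ) for every X; in particular φ(ρ,σ)[φ(σ,ρ)[τ]] = τ
for every Hermitian τ with τ ≪ ρ. -/
theorem rnDeriv_inverse
    (K : ℕ) (hK : 1 ≤ K) (ρ σ : Matrix (Fin K) (Fin K) ℂ)
    (hρ : ρ.PosSemidef) (hσ : σ.PosSemidef) (heq : EquivDO ρ σ) :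
    (∀ X : Matrix (Fin K) (Fin K) ℂ,
      rnDeriv ρ σ hρ hσ (rnDeriv σ ρ hσ hρ X) = rangeProj ρ hρ.1 * X * rangeProj ρ hρ.1) ∧
    (∀ τ : Matrix (Fin K) (Fin K) ℂ, τ.IsHermitian → AbsCont τ ρ →
      rnDeriv ρ σ hρ hσ (rnDeriv σ ρ hσ hρ τ) = τ) := by
  -- key facts
  have h1 : posSemidefSqrt hρ * rangeProj σ hσ.1 = posSemidefSqrt hρ :=
    mul_rangeProj hσ.1 (fun ψ hψ => sqrt_mulVec_zero hρ (heq.2 ψ hψ))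
  have h1' : rangeProj σ hσ.1 * posSemidefSqrt hρ = posSemidefSqrt hρ := by
    have := congrArg Matrix.conjTranspose h1
    rwa [Matrix.conjTranspose_mul, (rangeProj_isHermitian hσ.1).eq, (posSemidefSqrt_isHermitian hρ).eq]
      at this
  have hmain : ∀ X : Matrix (Fin K) (Fin K) ℂ,
      rnDeriv ρ σ hρ hσ (rnDeriv σ ρ hσ hρ X) = rangeProj ρ hρ.1 * X * rangeProj ρ hρ.1 := by
    intro X
    simp only [rnDeriv, Matrix.mul_assoc]
    rw [← Matrix.mul_assoc (posSemidefSqrt hσ) (invSqrt σ hσ.1) (posSemidefSqrt hρ), sqrt_mul_invSqrt hσ, h1',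
      invSqrt_mul_sqrt hρ,
      ← Matrix.mul_assoc (invSqrt σ hσ.1) (posSemidefSqrt hσ), invSqrt_mul_sqrt hσ,
      ← Matrix.mul_assoc (posSemidefSqrt hρ) (rangeProj σ hσ.1), h1,
      ← Matrix.mul_assoc (posSemidefSqrt hρ) (invSqrt ρ hρ.1), sqrt_mul_invSqrt hρ]
  refine ⟨hmain, ?_⟩
  intro τ hτ hac
  have htp1 : τ * rangeProj ρ hρ.1 = τ := mul_rangeProj hρ.1 hac
  have htp2 : rangeProj ρ hρ.1 * τ = τ := by
    have := congrArg Matrix.conjTranspose htp1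
    rwa [Matrix.conjTranspose_mul, (rangeProj_isHermitian hρ.1).eq, hτ.eq] at this
  rw [hmain τ, Matrix.mul_assoc, htp1, htp2]
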